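/- Fix a finite stochastic game (K,I,J,g,q) with n states, an initial state k, and λ ∈ (0,1]. Define the |I|ⁿ × |J|ⁿ matrix W^k_λ(z) with entries W^k_λ(z)[𝐢,𝐣] = d^k_λ(𝐢,𝐣) − z·d^0_λ(𝐢,𝐣) over pure stationary strategy pairs (𝐢,𝐣). Then for any z₁ < z₂, val W^k_λ(z₁) − val W^k_λ(z₂) ≥ (z₂ − z₁)·λⁿ; in particular z ↦ val W^k_λ(z) is strictly decreasing. -/

import Mathlib

open Matrix

/-- The minimax value of a matrix game over mixed strategies (simplices). -/
noncomputable def matVal {α β : Type*} [Fintype α] [Fintype β]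
    (M : Matrix α β ℝ) : ℝ :=
  ⨆ s : stdSimplex ℝ α, ⨅ t : stdSimplex ℝ β, ∑ a, ∑ b, s.1 a * M a b * t.1 b

/-- Transition matrix induced by a pure stationary strategy pair. -/
def Qpure {n : ℕ} {I J : Type} (q : Fin n → I → J → Fin n → ℝ)
    (bi : Fin n → I) (bj : Fin n → J) : Matrix (Fin n) (Fin n) ℝ :=
  Matrix.of fun ℓ ℓ' => q ℓ (bi ℓ) (bj ℓ) ℓ'

/-- `d^0_λ(𝐢,𝐣) = det (Id - (1-λ) Q(𝐢,𝐣))`. -/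
noncomputable def d0 {n : ℕ} {I J : Type} (q : Fin n → I → J → Fin n → ℝ)
    (lam : ℝ) (bi : Fin n → I) (bj : Fin n → J) : ℝ :=
  ((1 : Matrix (Fin n) (Fin n) ℝ) - (1 - lam) • Qpure q bi bj).det

/-- `d^k_λ(𝐢,𝐣)`: the same determinant with the `k`-th column replaced by `λ g(𝐢,𝐣)`. -/
noncomputable def dk {n : ℕ} {I J : Type} (g : Fin n → I → J → ℝ)
    (q : Fin n → I → J → Fin n → ℝ) (k : Fin n) (lam : ℝ)
    (bi : Fin n → I) (bj : Fin n → J) : ℝ :=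
  (((1 : Matrix (Fin n) (Fin n) ℝ) - (1 - lam) • Qpure q bi bj).updateCol k
    (lam • fun ℓ => g ℓ (bi ℓ) (bj ℓ))).det

/-- The parameterized matrix `W^k_λ(z)` with entries `d^k_λ(𝐢,𝐣) - z d^0_λ(𝐢,𝐣)` over
pure stationary strategy pairs. -/
noncomputable def Wmat {n : ℕ} {I J : Type} (g : Fin n → I → J → ℝ)
    (q : Fin n → I → J → Fin n → ℝ) (k : Fin n) (lam z : ℝ) :
    Matrix (Fin n → I) (Fin n → J) ℝ :=
  Matrix.of fun bi bj => dk g q k lam bi bj - z * d0 q lam bi bj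

lemma coord_le_one {ι : Type*} [Fintype ι] (s : stdSimplex ℝ ι) (a : ι) : s.1 a ≤ 1 := by
  obtain ⟨h0, h1⟩ := s.2
  calc s.1 a ≤ ∑ b, s.1 b := Finset.single_le_sum (fun b _ => h0 b) (Finset.mem_univ a)
    _ = 1 := h1

lemma matVal_shift {α β : Type*} [Fintype α] [Fintype β] [Nonempty α] [Nonempty β]
    (M N : Matrix α β ℝ) (c : ℝ) (h : ∀ a b, N a b + c ≤ M a b) :
    matVal N + c ≤ matVal M := by
  classical
  haveI hA : Nonempty (stdSimplex ℝ α) :=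
    ⟨⟨_, ite_eq_mem_stdSimplex ℝ (Classical.arbitrary α)⟩⟩
  haveI hB : Nonempty (stdSimplex ℝ β) :=
    ⟨⟨_, ite_eq_mem_stdSimplex ℝ (Classical.arbitrary β)⟩⟩
  set pay : Matrix α β ℝ → stdSimplex ℝ α → stdSimplex ℝ β → ℝ :=
    fun M s t => ∑ a, ∑ b, s.1 a * M a b * t.1 b with hpay
  have hbound : ∀ (M : Matrix α β ℝ) (s : stdSimplex ℝ α) (t : stdSimplex ℝ β),
      |pay M s t| ≤ ∑ a, ∑ b, |M a b| := by
    intro M s t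
    calc |pay M s t| ≤ ∑ a, |∑ b, s.1 a * M a b * t.1 b| := Finset.abs_sum_le_sum_abs _ _
      _ ≤ ∑ a, ∑ b, |s.1 a * M a b * t.1 b| :=
          Finset.sum_le_sum fun a _ => Finset.abs_sum_le_sum_abs _ _
      _ ≤ ∑ a, ∑ b, |M a b| := by
          refine Finset.sum_le_sum fun a _ => Finset.sum_le_sum fun b _ => ?_
          rw [abs_mul, abs_mul]
          have h1 : |s.1 a| ≤ 1 := by rw [abs_of_nonneg (s.2.1 a)]; exact coord_le_one s a
          have h2 : |t.1 b| ≤ 1 := by rw [abs_of_nonneg (t.2.1 b)]; exact coord_le_one t b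
          calc |s.1 a| * |M a b| * |t.1 b| ≤ |M a b| * |t.1 b| :=
                mul_le_mul_of_nonneg_right
                  (mul_le_of_le_one_left (abs_nonneg _) h1) (abs_nonneg _)
            _ ≤ |M a b| := mul_le_of_le_one_right (abs_nonneg _) h2
  have hpt : ∀ s t, pay N s t + c ≤ pay M s t := by
    intro s t
    have hc : (∑ a, ∑ b, s.1 a * c * t.1 b) = c := by
      have h1 : ∀ a : α, (∑ b, s.1 a * c * t.1 b) = s.1 a * c := by
        intro a; rw [← Finset.mul_sum, t.2.2, mul_one]
      rw [Finset.sum_congr rfl fun a _ => h1 a, ← Finset.sum_mul, s.2.2, one_mul]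
    have key : ∑ a, ∑ b, s.1 a * c * t.1 b ≤
        ∑ a, ∑ b, (s.1 a * M a b * t.1 b - s.1 a * N a b * t.1 b) := by
      refine Finset.sum_le_sum fun a _ => Finset.sum_le_sum fun b _ => ?_
      have h0s := s.2.1 a
      have h0t := t.2.1 b
      have hab := h a b
      nlinarith [mul_nonneg (mul_nonneg h0s (by linarith : (0:ℝ) ≤ M a b - N a b - c)) h0t]
    have hsplit : ∑ a, ∑ b, (s.1 a * M a b * t.1 b - s.1 a * N a b * t.1 b)
        = pay M s t - pay N s t := by
      rw [hpay]
      simp [Finset.sum_sub_distrib]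
    rw [hc, hsplit] at key
    linarith
  have bdd : ∀ (M : Matrix α β ℝ) (s : stdSimplex ℝ α),
      BddBelow (Set.range fun t => pay M s t) := by
    intro M s
    refine ⟨-(∑ a, ∑ b, |M a b|), ?_⟩
    rintro r ⟨t, rfl⟩
    have := hbound M s t
    rw [abs_le] at this
    exact this.1
  have hFG : ∀ s, (⨅ t, pay N s t) + c ≤ ⨅ t, pay M s t := by
    intro s
    refine le_ciInf fun t => ?_
    have h1 : (⨅ t, pay N s t) ≤ pay N s t := ciInf_le (bdd N s) t
    have h2 := hpt s t
    linarith
  have bddF : BddAbove (Set.range fun s => ⨅ t, pay M s t) := by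
    refine ⟨∑ a, ∑ b, |M a b|, ?_⟩
    rintro r ⟨s, rfl⟩
    obtain ⟨t0⟩ := hB
    refine (ciInf_le (bdd M s) t0).trans ?_
    have := hbound M s t0
    rw [abs_le] at this
    exact this.2
  have hle : ∀ s, (⨅ t, pay N s t) + c ≤ matVal M := by
    intro s
    refine (hFG s).trans ?_
    exact le_ciSup bddF s
  have hfin : matVal N ≤ matVal M - c := by
    have : (⨆ s, ⨅ t, pay N s t) ≤ matVal M - c :=
      ciSup_le fun s => by linarith [hle s]
    exact this
  linarith

lemma ostrowski_step (m : ℕ) (lam : ℝ) (hl : 0 < lam)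
    (ih : ∀ P : Matrix (Fin m) (Fin m) ℝ, (∀ i j, 0 ≤ P i j) →
      (∀ i, ∑ j, P i j ≤ 1 - lam) →
      lam ^ m ≤ ((1 : Matrix (Fin m) (Fin m) ℝ) - P).det)
    (Q : Matrix (Fin 1 ⊕ Fin m) (Fin 1 ⊕ Fin m) ℝ)
    (hQ : ∀ i j, 0 ≤ Q i j) (hrow : ∀ i, ∑ j, Q i j ≤ 1 - lam) :
    lam ^ (m + 1) ≤ ((1 : Matrix (Fin 1 ⊕ Fin m) (Fin 1 ⊕ Fin m) ℝ) - Q).det := by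
  classical
  set M1 : Matrix (Fin 1 ⊕ Fin m) (Fin 1 ⊕ Fin m) ℝ := 1 - Q with hM1
  set a : ℝ := Q (Sum.inl 0) (Sum.inl 0) with ha
  set α : ℝ := 1 - a with hα
  have hsplitrow : ∀ i : Fin 1 ⊕ Fin m,
      ∑ j, Q i j = Q i (Sum.inl 0) + ∑ j : Fin m, Q i (Sum.inr j) := by
    intro i
    rw [Fintype.sum_sum_type]
    congr 1
    exact Fin.sum_univ_one _
  have ha_le : a ≤ 1 - lam := by
    have h1 := hrow (Sum.inl 0)
    rw [hsplitrow] at h1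
    have h2 : (0:ℝ) ≤ ∑ j : Fin m, Q (Sum.inl 0) (Sum.inr j) :=
      Finset.sum_nonneg fun j _ => hQ _ _
    linarith
  have hαlam : lam ≤ α := by simp only [hα]; linarith
  have hαpos : 0 < α := lt_of_lt_of_le hl hαlam
  -- the 1×1 top-left block
  have hA00 : M1.toBlocks₁₁ 0 0 = α := by
    simp [hM1, Matrix.toBlocks₁₁, Matrix.one_apply, ha, hα]
  have hdetA : M1.toBlocks₁₁.det = α := by rw [Matrix.det_fin_one, hA00]
  haveI : Invertible M1.toBlocks₁₁.det := invertibleOfNonzero (by rw [hdetA]; positivity)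
  haveI : Invertible M1.toBlocks₁₁ := M1.toBlocks₁₁.invertibleOfDetInvertible
  have hinvA : ⅟M1.toBlocks₁₁ = α⁻¹ • (1 : Matrix (Fin 1) (Fin 1) ℝ) := by
    rw [invOf_eq_nonsing_inv, Matrix.inv_def, Matrix.adjugate_fin_one, hdetA,
      Ring.inverse_eq_inv]
  have hdet : M1.det = α * (M1.toBlocks₂₂ - α⁻¹ • (M1.toBlocks₂₁ * M1.toBlocks₁₂)).det := by
    conv_lhs => rw [← Matrix.fromBlocks_toBlocks M1]
    rw [Matrix.det_fromBlocks₁₁, hdetA, hinvA, Matrix.mul_smul, Matrix.mul_one,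
      Matrix.smul_mul]
  set P' : Matrix (Fin m) (Fin m) ℝ :=
    fun i j => Q (Sum.inr i) (Sum.inr j)
      + α⁻¹ * (Q (Sum.inr i) (Sum.inl 0) * Q (Sum.inl 0) (Sum.inr j)) with hP'
  have hblocks : M1.toBlocks₂₂ - α⁻¹ • (M1.toBlocks₂₁ * M1.toBlocks₁₂)
      = (1 : Matrix (Fin m) (Fin m) ℝ) - P' := by
    ext i j
    simp only [Matrix.sub_apply, Matrix.smul_apply, Matrix.mul_apply,
      Matrix.toBlocks₂₂, Matrix.toBlocks₂₁, Matrix.toBlocks₁₂, Matrix.of_apply,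
      Fin.sum_univ_one, hM1, Matrix.one_apply, Sum.inr.injEq, smul_eq_mul, hP']
    by_cases hij : i = j <;> simp [hij] <;> (erw [Matrix.sub_apply]; simp [hij, Matrix.one_apply]) <;> ring
  have hP'0 : ∀ i j, 0 ≤ P' i j := by
    intro i j
    have : 0 ≤ α⁻¹ := le_of_lt (inv_pos.mpr hαpos)
    have h1 := hQ (Sum.inr i) (Sum.inr j)
    have h2 := hQ (Sum.inr i) (Sum.inl 0)
    have h3 := hQ (Sum.inl 0) (Sum.inr j)
    simp only [hP']
    positivity
  have hP'row : ∀ i, ∑ j, P' i j ≤ 1 - lam := by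
    intro i
    have hsum : ∑ j, P' i j = (∑ j : Fin m, Q (Sum.inr i) (Sum.inr j))
        + α⁻¹ * (Q (Sum.inr i) (Sum.inl 0) * ∑ j : Fin m, Q (Sum.inl 0) (Sum.inr j)) := by
      simp only [hP']
      rw [Finset.sum_add_distrib]
      congr 1
      rw [Finset.mul_sum, Finset.mul_sum]
    set ci : ℝ := Q (Sum.inr i) (Sum.inl 0) with hci
    set tx : ℝ := ∑ j : Fin m, Q (Sum.inl 0) (Sum.inr j) with htx
    have htx0 : 0 ≤ tx := Finset.sum_nonneg fun j _ => hQ _ _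
    have htxα : tx ≤ α := by
      have h1 := hrow (Sum.inl 0)
      rw [hsplitrow] at h1
      simp only [hα]
      linarith
    have hci0 : 0 ≤ ci := hQ _ _
    have hSi := hrow (Sum.inr i)
    rw [hsplitrow] at hSi
    have hkey : α⁻¹ * (ci * tx) ≤ ci := by
      have h1 : α⁻¹ * (ci * tx) ≤ α⁻¹ * (ci * α) := by
        have := inv_pos.mpr hαpos
        have : 0 ≤ α⁻¹ := le_of_lt this
        apply mul_le_mul_of_nonneg_left _ this
        exact mul_le_mul_of_nonneg_left htxα hci0
      have h2 : α⁻¹ * (ci * α) = ci := by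
        field_simp
      linarith
    rw [hsum]
    linarith
  have hdet' := ih P' hP'0 hP'row
  rw [hM1] at hdet
  rw [hdet, hblocks]
  have hpm : (0:ℝ) < lam ^ m := pow_pos hl m
  calc lam ^ (m + 1) = lam * lam ^ m := by rw [pow_succ]; ring
    _ ≤ α * ((1 : Matrix (Fin m) (Fin m) ℝ) - P').det :=
        mul_le_mul hαlam hdet' (le_of_lt hpm) (le_of_lt hαpos)

lemma ostrowski (lam : ℝ) (hl : 0 < lam) :
    ∀ (n : ℕ) (P : Matrix (Fin n) (Fin n) ℝ),
      (∀ i j, 0 ≤ P i j) → (∀ i, ∑ j, P i j ≤ 1 - lam) →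
      lam ^ n ≤ ((1 : Matrix (Fin n) (Fin n) ℝ) - P).det := by
  intro n
  induction n with
  | zero =>
      intro P _ _
      simp [Matrix.det_fin_zero]
  | succ m ih =>
      intro P hP hrow
      have e : Fin (m + 1) ≃ (Fin 1 ⊕ Fin m) :=
        (finCongr (Nat.add_comm m 1)).trans finSumFinEquiv.symm
      set Q : Matrix (Fin 1 ⊕ Fin m) (Fin 1 ⊕ Fin m) ℝ := P.submatrix ⇑e.symm ⇑e.symm with hQdef
      have h1 : ((1 : Matrix (Fin (m+1)) (Fin (m+1)) ℝ) - P).det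
          = ((1 : Matrix (Fin 1 ⊕ Fin m) (Fin 1 ⊕ Fin m) ℝ) - Q).det := by
        rw [← Matrix.det_submatrix_equiv_self e.symm
          ((1 : Matrix (Fin (m+1)) (Fin (m+1)) ℝ) - P)]
        congr 1
        ext i j
        simp [Matrix.submatrix_apply, Matrix.one_apply, hQdef, e.symm.injective.eq_iff]
      rw [h1]
      refine ostrowski_step m lam hl ih Q (fun i j => hP _ _) fun i => ?_
      calc ∑ j, Q i j = ∑ j, P (e.symm i) (e.symm j) := rfl
        _ = ∑ kk, P (e.symm i) kk := Equiv.sum_comp e.symm _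
        _ ≤ 1 - lam := hrow (e.symm i)

/-- For `z₁ < z₂`, `val W^k_λ(z₁) - val W^k_λ(z₂) ≥ (z₂ - z₁) λⁿ`; in particular
`z ↦ val W^k_λ(z)` is strictly decreasing. -/
theorem stmt14 (n : ℕ) (I J : Type) [Fintype I] [Fintype J] [Nonempty I] [Nonempty J]
    (g : Fin n → I → J → ℝ) (q : Fin n → I → J → Fin n → ℝ)
    (hq0 : ∀ ℓ i j ℓ', 0 ≤ q ℓ i j ℓ') (hq1 : ∀ ℓ i j, ∑ ℓ', q ℓ i j ℓ' = 1)
    (lam : ℝ) (hl0 : 0 < lam) (hl1 : lam ≤ 1) (k : Fin n) :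
    (∀ z₁ z₂ : ℝ, z₁ < z₂ →
      (z₂ - z₁) * lam ^ n ≤ matVal (Wmat g q k lam z₁) - matVal (Wmat g q k lam z₂)) ∧
    StrictAnti fun z : ℝ => matVal (Wmat g q k lam z) := by
  have hd0 : ∀ bi bj, lam ^ n ≤ d0 q lam bi bj := by
    intro bi bj
    refine ostrowski lam hl0 n ((1 - lam) • Qpure q bi bj) ?_ ?_
    · intro i j
      show 0 ≤ (1 - lam) * q i (bi i) (bj i) j
      exact mul_nonneg (by linarith) (hq0 _ _ _ _)
    · intro i
      have h2 : ∑ j, ((1 - lam) • Qpure q bi bj) i j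
          = (1 - lam) * ∑ j, q i (bi i) (bj i) j := by
        rw [Finset.mul_sum]; rfl
      rw [h2, hq1]
      simp
  have key : ∀ z₁ z₂ : ℝ, z₁ < z₂ →
      (z₂ - z₁) * lam ^ n ≤ matVal (Wmat g q k lam z₁) - matVal (Wmat g q k lam z₂) := by
    intro z₁ z₂ hz
    have hshift := matVal_shift (Wmat g q k lam z₁) (Wmat g q k lam z₂)
      ((z₂ - z₁) * lam ^ n) ?_
    · linarith
    · intro bi bj
      have hd := hd0 bi bj
      show dk g q k lam bi bj - z₂ * d0 q lam bi bj + (z₂ - z₁) * lam ^ n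
        ≤ dk g q k lam bi bj - z₁ * d0 q lam bi bj
      nlinarith
  refine ⟨key, ?_⟩
  intro z₁ z₂ hz
  have h := key z₁ z₂ hz
  have hpos : 0 < (z₂ - z₁) * lam ^ n := mul_pos (by linarith) (pow_pos hl0 n)
  show matVal (Wmat g q k lam z₂) < matVal (Wmat g q k lam z₁)
  linarith
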